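/- arXiv:2602.08985 — 4 statements merged into one kernel-verified Lean document; each statement's English description precedes it below -/
import Mathlib

section
/- Let L ≥ 1 be an integer and let 0 < δ < 1/2. Define F : ℝ → ℂ by F(θ) = e^{-iπLθ} · T_L(cos(πθ)/cos(πδ)) / T_L(1/cos(πδ)). Then F(0) = 1, |F(θ)| ≤ 1 for all real θ, and |F(-θ)| = |F(θ)| for all real θ. -/
open Real Polynomial Polynomial.Chebyshev

lemma T_real_cosh' (n : ℕ) (t : ℝ) :
    (Polynomial.Chebyshev.T ℝ (n:ℤ)).eval (Real.cosh t) = Real.cosh (n * t) := by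
  have h := Polynomial.Chebyshev.T_complex_cos ((t:ℂ) * Complex.I) (n:ℤ)
  rw [Complex.cos_mul_I] at h
  have h2 : ((n:ℤ):ℂ) * ((t:ℂ) * Complex.I) = ((n * t : ℝ):ℂ) * Complex.I := by push_cast; ring
  rw [h2, Complex.cos_mul_I] at h
  exact_mod_cast h

lemma T_eval_neg' (n : ℕ) (x : ℝ) :
    (Polynomial.Chebyshev.T ℝ (n:ℤ)).eval (-x)
      = (-1)^n * (Polynomial.Chebyshev.T ℝ (n:ℤ)).eval x := by
  induction n using Nat.twoStepInduction generalizing x with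
  | zero => simp [Polynomial.Chebyshev.T_zero]
  | one => simp [Polynomial.Chebyshev.T_one]
  | more n ih1 ih2 =>
    have hc : ((n + 2 : ℕ) : ℤ) = (n:ℤ) + 2 := by push_cast; ring
    have hc1 : ((n + 1 : ℕ) : ℤ) = (n:ℤ) + 1 := by push_cast; ring
    rw [hc, Polynomial.Chebyshev.T_add_two]
    simp only [eval_sub, eval_mul, eval_X, eval_ofNat]
    rw [← hc1, ih2, ih1]
    ring

lemma exists_cosh_eq' {c : ℝ} (hc : 1 ≤ c) : ∃ t : ℝ, 0 ≤ t ∧ Real.cosh t = c := by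
  refine ⟨Real.arsinh (Real.sqrt (c^2 - 1)), Real.arsinh_nonneg_iff.2 (Real.sqrt_nonneg _), ?_⟩
  rw [Real.cosh_arsinh, Real.sq_sqrt (by nlinarith : (0:ℝ) ≤ c^2 - 1)]
  rw [show 1 + (c^2 - 1) = c^2 by ring, Real.sqrt_sq (by linarith)]

lemma abs_T_le' (n : ℕ) {t x : ℝ} (ht : 0 ≤ t) (hx : |x| ≤ Real.cosh t) :
    |(Polynomial.Chebyshev.T ℝ (n:ℤ)).eval x| ≤ Real.cosh (n * t) := by
  rcases le_or_gt (|x|) 1 with h1 | h1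
  · have hx1 : -1 ≤ x := (abs_le.1 h1).1
    have hx2 : x ≤ 1 := (abs_le.1 h1).2
    have := Polynomial.Chebyshev.T_real_cos (Real.arccos x) (n:ℤ)
    rw [Real.cos_arccos hx1 hx2] at this
    rw [this]
    exact le_trans (Real.abs_cos_le_one _) (Real.one_le_cosh _)
  · obtain ⟨s, hs0, hs⟩ := exists_cosh_eq' h1.le
    have hst : s ≤ t := by
      have h' : Real.cosh s ≤ Real.cosh t := by rw [hs]; exact hx
      have h2 := Real.cosh_le_cosh.1 h'
      rwa [abs_of_nonneg hs0, abs_of_nonneg ht] at h2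
    have hbound : Real.cosh (n * s) ≤ Real.cosh (n * t) := by
      apply Real.cosh_le_cosh.2
      rw [abs_of_nonneg (by positivity), abs_of_nonneg (by positivity)]
      exact mul_le_mul_of_nonneg_left hst (Nat.cast_nonneg n)
    rcases le_or_gt 0 x with h0 | h0
    · have hxs : x = Real.cosh s := by
        rw [hs, abs_of_nonneg h0]
      rw [hxs, T_real_cosh']
      rwa [abs_of_nonneg ((Real.cosh_pos _).le)]
    · have hxs : x = -Real.cosh s := by
        rw [hs, abs_of_neg h0]; ring
      rw [hxs, T_eval_neg', T_real_cosh', abs_mul, abs_pow, abs_neg, abs_one, one_pow, one_mul]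
      rwa [abs_of_nonneg ((Real.cosh_pos _).le)]

theorem stmt_2 (L : ℕ) (hL : 1 ≤ L) (δ : ℝ) (hδ0 : 0 < δ) (hδ : δ < 1 / 2)
    (F : ℝ → ℂ)
    (hF : ∀ θ : ℝ, F θ = Complex.exp (-Complex.I * π * L * θ) *
      ((((Polynomial.Chebyshev.T ℝ L).eval (Real.cos (π * θ) / Real.cos (π * δ))) /
        ((Polynomial.Chebyshev.T ℝ L).eval (1 / Real.cos (π * δ))) : ℝ) : ℂ)) :
    F 0 = 1 ∧ (∀ θ : ℝ, ‖F θ‖ ≤ 1) ∧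
      (∀ θ : ℝ, ‖F (-θ)‖ = ‖F θ‖) := by
  have hπ := Real.pi_pos
  have hc0 : 0 < Real.cos (π * δ) := by
    apply Real.cos_pos_of_mem_Ioo
    constructor <;> nlinarith
  have hc1 : Real.cos (π * δ) ≤ 1 := Real.cos_le_one _
  have hc : 1 ≤ 1 / Real.cos (π * δ) := by rw [le_div_iff₀ hc0]; linarith
  obtain ⟨t0, ht0, hcosh⟩ := exists_cosh_eq' hc
  have hdenom : (Polynomial.Chebyshev.T ℝ (L:ℤ)).eval (1 / Real.cos (π * δ))
      = Real.cosh (L * t0) := by rw [← hcosh, T_real_cosh']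
  have hdpos : 0 < (Polynomial.Chebyshev.T ℝ (L:ℤ)).eval (1 / Real.cos (π * δ)) := by
    rw [hdenom]; exact Real.cosh_pos _
  have habs_exp : ∀ θ : ℝ, ‖Complex.exp (-Complex.I * π * L * θ)‖ = 1 := by
    intro θ
    rw [show -Complex.I * (π:ℂ) * (L:ℂ) * (θ:ℂ) = ((-(π * L * θ) : ℝ) : ℂ) * Complex.I by
      push_cast; ring]
    exact Complex.norm_exp_ofReal_mul_I _
  have hkey : ∀ θ : ℝ, |(Polynomial.Chebyshev.T ℝ (L:ℤ)).eval
      (Real.cos (π * θ) / Real.cos (π * δ))|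
      ≤ (Polynomial.Chebyshev.T ℝ (L:ℤ)).eval (1 / Real.cos (π * δ)) := by
    intro θ
    rw [hdenom]
    apply abs_T_le' L ht0
    rw [hcosh, abs_div, abs_of_pos hc0]
    gcongr
    exact Real.abs_cos_le_one _
  refine ⟨?_, ?_, ?_⟩
  · rw [hF 0]
    simp only [mul_zero, Complex.ofReal_zero, Complex.exp_zero, Real.cos_zero]
    rw [div_self hdpos.ne', one_mul]
    norm_num
  · intro θ
    rw [hF θ, norm_mul, habs_exp, one_mul, Complex.norm_real, Real.norm_eq_abs, abs_div,
      abs_of_pos hdpos]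
    rw [div_le_one hdpos]
    exact hkey θ
  · intro θ
    rw [hF θ, hF (-θ), norm_mul, norm_mul, habs_exp, habs_exp, mul_neg, Real.cos_neg]
end

section
/- Let L ≥ 1 be an integer and let 0 < δ < 1/2. Define F : ℝ → ℂ by F(θ) = e^{-iπLθ} · T_L(cos(πθ)/cos(πδ)) / T_L(1/cos(πδ)). Then for every real θ with δ ≤ θ ≤ 1 - δ one has |F(θ)| ≤ 2 e^{-πLδ}. -/
open Real


lemma aux_sinh_le {x : ℝ} (hx : 0 ≤ x) : Real.sinh x ≤ x * Real.cosh x := by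
  have key : MonotoneOn (fun x : ℝ => x * Real.cosh x - Real.sinh x) (Set.Ici 0) := by
    have hd : ∀ y : ℝ, HasDerivAt (fun x : ℝ => x * Real.cosh x - Real.sinh x)
        (y * Real.sinh y) y := by
      intro y
      have := ((hasDerivAt_id y).mul (Real.hasDerivAt_cosh y)).sub (Real.hasDerivAt_sinh y)
      exact this.congr_deriv (by simp)
    apply monotoneOn_of_deriv_nonneg (convex_Ici 0)
    · exact (Continuous.continuousOn (by continuity))
    · intro y _; exact (hd y).differentiableAt.differentiableWithinAt
    · intro y hy
      rw [interior_Ici] at hy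
      rw [(hd y).deriv]
      exact mul_nonneg hy.le ((Real.sinh_pos_iff.2 hy).le)
  have := key (Set.self_mem_Ici) (Set.mem_Ici.2 hx) hx
  simp at this
  linarith

lemma aux_cos_cosh {x : ℝ} (h0 : 0 ≤ x) (h2 : x ≤ π / 2) :
    Real.cos x * Real.cosh x ≤ 1 := by
  have key : AntitoneOn (fun x : ℝ => Real.cos x * Real.cosh x) (Set.Icc 0 (π / 2)) := by
    have hd : ∀ y : ℝ, HasDerivAt (fun x : ℝ => Real.cos x * Real.cosh x)
        (Real.cos y * Real.sinh y - Real.sin y * Real.cosh y) y := by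
      intro y
      have := (Real.hasDerivAt_cos y).mul (Real.hasDerivAt_cosh y)
      exact this.congr_deriv (by ring)
    apply antitoneOn_of_deriv_nonpos (convex_Icc 0 (π / 2))
    · exact (Continuous.continuousOn (by continuity))
    · intro y _; exact (hd y).differentiableAt.differentiableWithinAt
    · intro y hy
      rw [interior_Icc] at hy
      rw [(hd y).deriv]
      have hy0 : 0 < y := hy.1
      have hy2 : y < π / 2 := hy.2
      have hcos : 0 < Real.cos y := Real.cos_pos_of_mem_Ioo ⟨by linarith, hy2⟩
      have hcosh : 0 < Real.cosh y := Real.cosh_pos y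
      have h1 : Real.cos y * Real.sinh y ≤ Real.cos y * (y * Real.cosh y) :=
        mul_le_mul_of_nonneg_left (aux_sinh_le hy0.le) hcos.le
      have h3 : y < Real.tan y := Real.lt_tan hy0 hy2
      have h4 : y * (Real.cos y * Real.cosh y) ≤ Real.tan y * (Real.cos y * Real.cosh y) :=
        mul_le_mul_of_nonneg_right h3.le (by positivity)
      have h5 : Real.tan y * Real.cos y = Real.sin y := Real.tan_mul_cos hcos.ne'
      nlinarith
  have := key (Set.mem_Icc.2 ⟨le_refl 0, by positivity⟩) (Set.mem_Icc.2 ⟨h0, h2⟩) h0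
  simpa using this

theorem stmt_3 (L : ℕ) (hL : 1 ≤ L) (δ : ℝ) (hδ0 : 0 < δ) (hδ : δ < 1 / 2)
    (F : ℝ → ℂ)
    (hF : ∀ θ : ℝ, F θ = Complex.exp (-Complex.I * π * L * θ) *
      ((((Polynomial.Chebyshev.T ℝ L).eval (Real.cos (π * θ) / Real.cos (π * δ))) /
        ((Polynomial.Chebyshev.T ℝ L).eval (1 / Real.cos (π * δ))) : ℝ) : ℂ)) :
    ∀ θ : ℝ, δ ≤ θ → θ ≤ 1 - δ →
      ‖F θ‖ ≤ 2 * Real.exp (-(π * L * δ)) := by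
  intro θ hθ1 hθ2
  have hπ := Real.pi_pos
  set c := Real.cos (π * δ) with hc
  have hπδ0 : 0 < π * δ := by positivity
  have hπδ2 : π * δ < π / 2 := by nlinarith
  have hcpos : 0 < c := Real.cos_pos_of_mem_Ioo ⟨by linarith, hπδ2⟩
  have hc1 : c ≤ 1 := Real.cos_le_one _
  have hx1 : 1 ≤ 1 / c := by rw [le_div_iff₀ hcpos]; linarith
  have hx0 : (0:ℝ) ≤ 1 / c := by positivity
  -- find t ≥ 0 with cosh t = 1/c
  obtain ⟨t, ht_mem, ht⟩ : ∃ t ∈ Set.Icc (0:ℝ) (1/c), Real.cosh t = 1 / c := by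
    apply intermediate_value_Icc hx0 Real.continuous_cosh.continuousOn
    constructor
    · simpa using hx1
    · rcases eq_or_lt_of_le hx0 with h | h
      · simp [← h]
      · have h1 : 1/c < Real.sinh (1/c) := Real.self_lt_sinh_iff.2 h
        have h2 : Real.sinh (1/c) < Real.cosh (1/c) := Real.sinh_lt_cosh _
        linarith
  have ht0 : 0 ≤ t := ht_mem.1
  -- t ≥ πδ
  have htπδ : π * δ ≤ t := by
    have h1 : Real.cosh (π * δ) ≤ 1 / c := by
      have := aux_cos_cosh hπδ0.le hπδ2.le
      rw [le_div_iff₀ hcpos]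
      linarith
    have h2 : Real.cosh (π * δ) ≤ Real.cosh t := by rw [ht]; exact h1
    have h3 : |π * δ| ≤ |t| := Real.cosh_le_cosh.1 h2
    rwa [abs_of_pos hπδ0, abs_of_nonneg ht0] at h3
  -- denominator evaluation
  have hden : (Polynomial.Chebyshev.T ℝ (L:ℤ)).eval (1 / c) = Real.cosh (L * t) := by
    have h1 : (((Polynomial.Chebyshev.T ℝ (L:ℤ)).eval (1/c) : ℝ) : ℂ)
        = (Polynomial.Chebyshev.T ℂ (L:ℤ)).eval ((1/c : ℝ) : ℂ) :=
      Polynomial.Chebyshev.complex_ofReal_eval_T _ _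
    have h2 : ((1/c : ℝ) : ℂ) = Complex.cos ((t:ℂ) * Complex.I) := by
      rw [Complex.cos_mul_I, ← Complex.ofReal_cosh, ht]
    have h3 := Polynomial.Chebyshev.T_complex_cos ((t:ℂ) * Complex.I) (L:ℤ)
    have h4 : ((L:ℤ):ℂ) * ((t:ℂ) * Complex.I) = ((L * t : ℝ):ℂ) * Complex.I := by
      push_cast; ring
    have : (((Polynomial.Chebyshev.T ℝ (L:ℤ)).eval (1/c) : ℝ) : ℂ)
        = ((Real.cosh (L * t) : ℝ) : ℂ) := by
      rw [h1, h2, h3, h4, Complex.cos_mul_I, ← Complex.ofReal_cosh]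
    exact_mod_cast this
  -- numerator bound
  set y : ℝ := Real.cos (π * θ) / c with hy
  have hcosθ_le : Real.cos (π * θ) ≤ c :=
    Real.cos_le_cos_of_nonneg_of_le_pi hπδ0.le
      (by nlinarith) (by nlinarith)
  have hcosθ_ge : -c ≤ Real.cos (π * θ) := by
    have h1 : Real.cos (π * (1 - δ)) ≤ Real.cos (π * θ) :=
      Real.cos_le_cos_of_nonneg_of_le_pi (by nlinarith) (by nlinarith) (by nlinarith)
    have h2 : π * (1 - δ) = π - π * δ := by ring
    rwa [h2, Real.cos_pi_sub] at h1
  have hy1 : -1 ≤ y := by rw [hy, le_div_iff₀ hcpos]; linarith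
  have hy2 : y ≤ 1 := by rw [hy, div_le_iff₀ hcpos]; linarith
  have hnum : |(Polynomial.Chebyshev.T ℝ (L:ℤ)).eval y| ≤ 1 := by
    have h1 : Real.cos (Real.arccos y) = y := Real.cos_arccos hy1 hy2
    rw [← h1, Polynomial.Chebyshev.T_real_cos]
    exact Real.abs_cos_le_one _
  -- exponent bound
  have hLpos : (1:ℝ) ≤ (L:ℝ) := by exact_mod_cast hL
  have hLt : π * L * δ ≤ (L:ℝ) * t := by nlinarith
  have hdenpos : 0 < Real.cosh ((L:ℝ) * t) := Real.cosh_pos _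
  have hcosh_ge : Real.exp (π * L * δ) / 2 ≤ Real.cosh ((L:ℝ) * t) := by
    rw [Real.cosh_eq]
    have h1 : Real.exp (π * L * δ) ≤ Real.exp ((L:ℝ) * t) := Real.exp_le_exp.2 hLt
    have h2 : (0:ℝ) < Real.exp (-((L:ℝ) * t)) := Real.exp_pos _
    linarith
  -- put together
  rw [hF θ, norm_mul]
  have habs1 : ‖(Complex.exp (-Complex.I * π * L * θ))‖ = 1 := by
    rw [Complex.norm_exp]
    have : (-Complex.I * π * L * θ).re = 0 := by simp
    rw [this, Real.exp_zero]
  rw [habs1, one_mul, Complex.norm_real, Real.norm_eq_abs, hden, abs_div, abs_of_pos hdenpos]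
  rw [div_le_iff₀ hdenpos]
  have hexp : 0 < Real.exp (-(π * L * δ)) := Real.exp_pos _
  have h6 : Real.exp (-(π * L * δ)) * Real.exp (π * L * δ) = 1 := by
    rw [← Real.exp_add]; simp
  nlinarith [mul_le_mul_of_nonneg_left hcosh_ge (by positivity : (0:ℝ) ≤ 2 * Real.exp (-(π * L * δ)))]
end

section
/- Let L ≥ 1 be an integer and let f : ℝ → ℂ be a continuous function satisfying: |f(θ)| ≤ 1 for all θ, |f(-θ)| = |f(θ)| for all θ, f(θ + 1) = f(θ) for all θ, and ∫_0^1 |f(θ)|² dθ ≥ 1/(L+1). Then ∫_0^{1/2} |f(θ)|² sin(2πθ)² dθ ≥ 1/(64 L²(L+1)). -/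
open Real MeasureTheory

set_option maxHeartbeats 1000000

theorem stmt_8 (L : ℕ) (hL : 1 ≤ L) (f : ℝ → ℂ) (hcont : Continuous f)
    (hbound : ∀ θ : ℝ, ‖f θ‖ ≤ 1)
    (heven : ∀ θ : ℝ, ‖f (-θ)‖ = ‖f θ‖)
    (hper : ∀ θ : ℝ, f (θ + 1) = f θ)
    (hL2 : 1 / (L + 1) ≤ ∫ θ in (0:ℝ)..1, ‖f θ‖ ^ 2) :
    1 / (64 * L ^ 2 * (L + 1)) ≤
      ∫ θ in (0:ℝ)..(1 / 2), ‖f θ‖ ^ 2 * Real.sin (2 * π * θ) ^ 2 := by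
  set g : ℝ → ℝ := fun θ => ‖f θ‖ ^ 2 with hgdef
  have hgcont : Continuous g := (continuous_norm.comp hcont).pow 2
  have hg0 : ∀ θ, 0 ≤ g θ := fun θ => sq_nonneg _
  have hg1 : ∀ θ, g θ ≤ 1 := fun θ =>
    pow_le_one₀ (norm_nonneg _) (hbound θ)
  have hgper : Function.Periodic g 1 := fun θ => by simp [hgdef, hper θ]
  have hgeven : ∀ θ, g (-θ) = g θ := fun θ => by simp [hgdef, heven θ]
  have hLpos : (0:ℝ) < (L:ℝ) := by exact_mod_cast hL
  have hL1 : (1:ℝ) ≤ (L:ℝ) := by exact_mod_cast hL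
  set ε : ℝ := 1 / (16 * L) with hεdef
  have hεpos : 0 < ε := by positivity
  have hεle : ε ≤ 1 / 16 := by
    rw [hεdef, div_le_div_iff₀ (by positivity) (by norm_num)]
    linarith
  have hint : ∀ a b : ℝ, IntervalIntegrable g volume a b :=
    fun a b => hgcont.intervalIntegrable a b
  -- step 1 : ∫_0^1 g = 2 ∫_0^{1/2} g
  have hhalf : ∫ θ in (0:ℝ)..1, g θ = 2 * ∫ θ in (0:ℝ)..(1/2), g θ := by
    have h1 : ∫ θ in (-(1/2):ℝ)..(-(1/2)+1), g θ = ∫ θ in (0:ℝ)..(0+1), g θ :=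
      hgper.intervalIntegral_add_eq (-(1/2)) 0
    have h2 : ∫ θ in (-(1/2):ℝ)..(1/2), g θ =
        (∫ θ in (-(1/2):ℝ)..0, g θ) + ∫ θ in (0:ℝ)..(1/2), g θ :=
      (intervalIntegral.integral_add_adjacent_intervals (hint _ _) (hint _ _)).symm
    have h3 : ∫ θ in (-(1/2):ℝ)..0, g θ = ∫ θ in (0:ℝ)..(1/2), g θ := by
      have h := intervalIntegral.integral_comp_neg (a := (0:ℝ)) (b := 1/2) g
      simp only [neg_zero] at h
      rw [← h]
      simp [hgeven]
    have h4 : (-(1/2):ℝ) + 1 = 1/2 := by norm_num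
    rw [show (0:ℝ)+1 = 1 by norm_num, h4] at h1
    rw [← h1, h2, h3]; ring
  have hI : (1:ℝ) / (2*(L+1)) ≤ ∫ θ in (0:ℝ)..(1/2), g θ := by
    have := hL2
    rw [hhalf] at this
    push_cast at this ⊢
    have hne1 : ((L:ℝ)+1) ≠ 0 := ne_of_gt (by positivity)
    have heq : (1:ℝ)/(2*((L:ℝ)+1)) = (1/((L:ℝ)+1))/2 := by field_simp
    linarith [this]
  -- edge bounds
  have hedge1 : ∫ θ in (0:ℝ)..ε, g θ ≤ ε := by
    calc ∫ θ in (0:ℝ)..ε, g θ ≤ ∫ θ in (0:ℝ)..ε, (1:ℝ) := by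
          apply intervalIntegral.integral_mono_on hεpos.le (hint _ _)
            (intervalIntegrable_const)
          intro x _; exact hg1 x
      _ = ε := by simp
  have hedge2 : ∫ θ in (1/2-ε:ℝ)..(1/2), g θ ≤ ε := by
    calc ∫ θ in (1/2-ε:ℝ)..(1/2), g θ ≤ ∫ θ in (1/2-ε:ℝ)..(1/2), (1:ℝ) := by
          apply intervalIntegral.integral_mono_on (by linarith) (hint _ _)
            (intervalIntegrable_const)
          intro x _; exact hg1 x
      _ = ε := by simp
  have hsplit : ∫ θ in (0:ℝ)..(1/2), g θ =
      (∫ θ in (0:ℝ)..ε, g θ) + (∫ θ in (ε:ℝ)..(1/2-ε), g θ)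
        + ∫ θ in (1/2-ε:ℝ)..(1/2), g θ := by
    rw [intervalIntegral.integral_add_adjacent_intervals (hint 0 ε) (hint ε (1/2-ε)),
      intervalIntegral.integral_add_adjacent_intervals (hint 0 (1/2-ε)) (hint (1/2-ε) (1/2))]
  have hmid : (1:ℝ)/(4*(L+1)) ≤ ∫ θ in (ε:ℝ)..(1/2-ε), g θ := by
    have h2ε : 2*ε ≤ 1/(4*(L+1)) := by
      rw [hεdef, show (2:ℝ)*(1/(16*(L:ℝ))) = 1/(8*(L:ℝ)) by
        field_simp; ring, div_le_div_iff₀ (by positivity) (by positivity)]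
      nlinarith
    have : ∫ θ in (ε:ℝ)..(1/2-ε), g θ ≥ (∫ θ in (0:ℝ)..(1/2), g θ) - 2*ε := by
      rw [hsplit]; linarith
    have hne : ((L:ℝ)+1) ≠ 0 := ne_of_gt (by positivity)
    have h12 : (1:ℝ)/(2*((L:ℝ)+1)) - 1/(4*((L:ℝ)+1)) = 1/(4*((L:ℝ)+1)) := by
      field_simp; ring
    linarith
  -- sin lower bound on middle interval
  have hsin : ∀ θ, ε ≤ θ → θ ≤ 1/2 - ε → 4*ε ≤ Real.sin (2*π*θ) := by
    intro θ h1 h2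
    rcases le_total θ (1/4) with h | h
    · have hx0 : (0:ℝ) ≤ 2*π*θ := by nlinarith [Real.pi_pos, hεpos]
      have hx1 : 2*π*θ ≤ π/2 := by nlinarith [Real.pi_pos]
      have := Real.mul_le_sin hx0 hx1
      have hπ : 2/π * (2*π*θ) = 4*θ := by field_simp; ring
      rw [hπ] at this
      linarith
    · have hs : Real.sin (2*π*θ) = Real.sin (π - 2*π*θ) := (Real.sin_pi_sub _).symm
      have hx0 : (0:ℝ) ≤ π - 2*π*θ := by nlinarith [Real.pi_pos]
      have hx1 : π - 2*π*θ ≤ π/2 := by nlinarith [Real.pi_pos]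
      have := Real.mul_le_sin hx0 hx1
      have hπ : 2/π * (π - 2*π*θ) = 2 - 4*θ := by field_simp; ring
      rw [hπ] at this
      rw [hs]
      linarith
  -- middle integral bound
  have hsincont : Continuous fun θ : ℝ => Real.sin (2*π*θ) ^ 2 :=
    (Real.continuous_sin.comp (continuous_const.mul continuous_id)).pow 2
  have hintc : ∀ a b : ℝ, IntervalIntegrable
      (fun θ => g θ * Real.sin (2*π*θ)^2) volume a b :=
    fun a b => (hgcont.mul hsincont).intervalIntegrable a b
  have hεle' : ε ≤ 1/2 - ε := by linarith
  have hmono : ∫ θ in (ε:ℝ)..(1/2-ε), 16*ε^2 * g θ ≤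
      ∫ θ in (ε:ℝ)..(1/2-ε), g θ * Real.sin (2*π*θ)^2 := by
    apply intervalIntegral.integral_mono_on hεle'
      ((continuous_const.mul hgcont).intervalIntegrable _ _) (hintc _ _)
    intro x hx
    rcases hx with ⟨hx1, hx2⟩
    have hs := hsin x hx1 hx2
    have h4 : (0:ℝ) ≤ 4*ε := by positivity
    have hs2 : 16*ε^2 ≤ Real.sin (2*π*x)^2 :=
      calc 16*ε^2 = (4*ε)^2 := by ring
        _ ≤ Real.sin (2*π*x)^2 := pow_le_pow_left₀ h4 hs 2
    calc 16*ε^2 * g x ≤ Real.sin (2*π*x)^2 * g x :=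
          mul_le_mul_of_nonneg_right hs2 (hg0 x)
      _ = g x * Real.sin (2*π*x)^2 := by ring
  have hmono' : 16*ε^2 * ∫ θ in (ε:ℝ)..(1/2-ε), g θ ≤
      ∫ θ in (ε:ℝ)..(1/2-ε), g θ * Real.sin (2*π*θ)^2 := by
    rw [← intervalIntegral.integral_const_mul]
    exact hmono
  -- total ≥ middle
  have hnn : ∀ a b : ℝ, a ≤ b → 0 ≤ ∫ θ in a..b, g θ * Real.sin (2*π*θ)^2 := by
    intro a b hab
    apply intervalIntegral.integral_nonneg hab
    intro x _
    exact mul_nonneg (hg0 x) (sq_nonneg _)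
  have htot : ∫ θ in (ε:ℝ)..(1/2-ε), g θ * Real.sin (2*π*θ)^2 ≤
      ∫ θ in (0:ℝ)..(1/2), g θ * Real.sin (2*π*θ)^2 := by
    have hsp : ∫ θ in (0:ℝ)..(1/2), g θ * Real.sin (2*π*θ)^2 =
        (∫ θ in (0:ℝ)..ε, g θ * Real.sin (2*π*θ)^2)
        + (∫ θ in (ε:ℝ)..(1/2-ε), g θ * Real.sin (2*π*θ)^2)
        + ∫ θ in (1/2-ε:ℝ)..(1/2), g θ * Real.sin (2*π*θ)^2 := by
      rw [intervalIntegral.integral_add_adjacent_intervals (hintc 0 ε) (hintc ε (1/2-ε)),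
        intervalIntegral.integral_add_adjacent_intervals (hintc 0 (1/2-ε)) (hintc (1/2-ε) (1/2))]
    rw [hsp]
    have := hnn 0 ε hεpos.le
    have := hnn (1/2-ε) (1/2) (by linarith)
    linarith
  -- final arithmetic
  have hne2 : ((L:ℝ)+1) ≠ 0 := ne_of_gt (by positivity)
  have hne3 : ((L:ℝ)) ≠ 0 := ne_of_gt hLpos
  have hfin : (1:ℝ) / (64 * (L:ℝ) ^ 2 * ((L:ℝ) + 1)) = 16*ε^2 * (1/(4*((L:ℝ)+1))) := by
    rw [hεdef]
    field_simp
    ring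
  have hchain : 16*ε^2 * (1/(4*(L+1))) ≤ 16*ε^2 * ∫ θ in (ε:ℝ)..(1/2-ε), g θ :=
    mul_le_mul_of_nonneg_left hmid (by positivity)
  push_cast at hfin ⊢
  calc (1:ℝ) / (64 * (L:ℝ) ^ 2 * ((L:ℝ) + 1)) ≤ 16*ε^2 * (1/(4*((L:ℝ)+1))) := le_of_eq hfin
    _ ≤ 16*ε^2 * ∫ θ in (ε:ℝ)..(1/2-ε), g θ := hchain
    _ ≤ ∫ θ in (ε:ℝ)..(1/2-ε), g θ * Real.sin (2*π*θ)^2 := hmono'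
    _ ≤ ∫ θ in (0:ℝ)..(1/2), g θ * Real.sin (2*π*θ)^2 := htot
end

section
/- Let L ≥ 1 be an integer and let 0 < δ < 1/2. Define F : ℝ → ℂ by F(θ) = e^{-iπLθ} · T_L(cos(πθ)/cos(πδ)) / T_L(1/cos(πδ)). Then ∫_0^1 |F(θ)|² dθ ≥ 1/(L+1) and ∫_0^{1/2} |F(θ)|² sin(2πθ)² dθ ≥ 1/(64 L²(L+1)). -/
open Real MeasureTheory

lemma sum_shift (lo hi s : ℤ) (g : ℤ → ℝ) :
    ∑ j ∈ Finset.Icc lo hi, g (j + s) = ∑ j ∈ Finset.Icc (lo+s) (hi+s), g j := by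
  rw [← Finset.map_add_right_Icc lo hi s, Finset.sum_map]
  rfl

lemma sum_ext (lo hi lo' hi' : ℤ) (h1 : lo' ≤ lo) (h2 : hi ≤ hi') (A f : ℤ → ℝ)
    (hA : ∀ j, A j ≠ 0 → lo ≤ j ∧ j ≤ hi) :
    ∑ j ∈ Finset.Icc lo hi, A j * f j = ∑ j ∈ Finset.Icc lo' hi', A j * f j := by
  apply Finset.sum_subset (Finset.Icc_subset_Icc h1 h2)
  intro x hx hnx
  have : A x = 0 := by
    by_contra h
    exact hnx (Finset.mem_Icc.2 ⟨(hA x h).1, (hA x h).2⟩)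
  simp [this]

lemma cheb_expand (c : ℝ) : ∀ n : ℕ,
    ∃ a : ℤ → ℝ, (∀ j, a (-j) = a j) ∧
      (∀ j : ℤ, a j ≠ 0 → -(n:ℤ) ≤ j ∧ j ≤ n ∧ ((n:ℤ) - j) % 2 = 0) ∧
      (∀ t : ℝ, (Polynomial.Chebyshev.T ℝ (n:ℤ)).eval (Real.cos t / c) =
        ∑ j ∈ Finset.Icc (-(n:ℤ)) (n:ℤ), a j * Real.cos (j * t)) := by
  intro n
  induction n using Nat.strong_induction_on with
  | _ n ih =>
    match n with
    | 0 =>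
      refine ⟨fun j => if j = 0 then 1 else 0, ?_, ?_, ?_⟩
      · intro j; simp [neg_eq_zero]
      · intro j hj
        simp only [ne_eq, ite_eq_right_iff, one_ne_zero, imp_false, not_not] at hj
        subst hj; norm_num
      · intro t
        simp [Polynomial.Chebyshev.T_zero]
    | 1 =>
      refine ⟨fun j => if j = 1 ∨ j = -1 then 1/(2*c) else 0, ?_, ?_, ?_⟩
      · intro j
        simp only
        split_ifs with h1 h2 h2 <;> first | rfl | omega
      · intro j hj
        simp only [ne_eq, ite_eq_right_iff, not_forall] at hj
        obtain ⟨h, -⟩ := hj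
        rcases h with rfl | rfl <;> norm_num
      · intro t
        have hI : Finset.Icc (-(1:ℤ)) 1 = {-1, 0, 1} := by decide
        show Polynomial.eval (cos t / c) (Polynomial.Chebyshev.T ℝ 1) =
          ∑ j ∈ Finset.Icc (-(1:ℤ)) 1, (if j = 1 ∨ j = -1 then 1/(2*c) else 0) * Real.cos (j * t)
        rw [hI, Polynomial.Chebyshev.T_one, Polynomial.eval_X]
        rw [Finset.sum_insert (by decide), Finset.sum_insert (by decide),
          Finset.sum_singleton]
        norm_num [Real.cos_neg]
        rcases eq_or_ne c 0 with rfl | hc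
        · simp
        · field_simp
          ring
    | (n+2) =>
      obtain ⟨a, has, haS, hae⟩ := ih (n+1) (by omega)
      obtain ⟨b, hbs, hbS, hbe⟩ := ih n (by omega)
      refine ⟨fun j => (a (j-1) + a (j+1))/c - b j, ?_, ?_, ?_⟩
      · intro j
        simp only
        have h1 : a (-j-1) = a (j+1) := by rw [show -j-1 = -(j+1) by ring, has]
        have h2 : a (-j+1) = a (j-1) := by rw [show -j+1 = -(j-1) by ring, has]
        rw [h1, h2, hbs]; ring
      · intro j hj
        simp only at hj
        have h : a (j-1) ≠ 0 ∨ a (j+1) ≠ 0 ∨ b j ≠ 0 := by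
          by_contra h
          push_neg at h
          apply hj
          rw [h.1, h.2.1, h.2.2]; simp
        push_cast
        rcases h with h|h|h
        · have := haS _ h; push_cast at this; omega
        · have := haS _ h; push_cast at this; omega
        · have := hbS _ h; push_cast at this; omega
      · intro t
        have hcast : ((n+2:ℕ):ℤ) = (n:ℤ)+2 := by push_cast; ring
        have key : (Polynomial.Chebyshev.T ℝ ((n:ℤ)+2)).eval (Real.cos t / c)
            = 2 * (Real.cos t / c) * ((Polynomial.Chebyshev.T ℝ ((n:ℤ)+1)).eval (Real.cos t / c))
              - (Polynomial.Chebyshev.T ℝ (n:ℤ)).eval (Real.cos t / c) := by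
          rw [Polynomial.Chebyshev.T_add_two]
          simp
        have hc1 : ((n+1:ℕ):ℤ) = (n:ℤ)+1 := by push_cast; ring
        rw [hcast, key, show ((n:ℤ)+1) = ((n+1:ℕ):ℤ) by omega, hae t, hbe t, hc1]
        -- now pure sums
        have stepA : 2 * (Real.cos t / c) * (∑ j ∈ Finset.Icc (-((n:ℤ)+1)) ((n:ℤ)+1), a j * Real.cos (j * t))
            = (∑ j ∈ Finset.Icc (-((n:ℤ)+1)) ((n:ℤ)+1), (a j / c) * Real.cos ((j+1) * t))
              + (∑ j ∈ Finset.Icc (-((n:ℤ)+1)) ((n:ℤ)+1), (a j / c) * Real.cos ((j-1) * t)) := by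
          rw [Finset.mul_sum, ← Finset.sum_add_distrib]
          apply Finset.sum_congr rfl
          intro j _
          rw [show ((j:ℝ)+1)*t = (j:ℝ)*t + t by ring, show ((j:ℝ)-1)*t = (j:ℝ)*t - t by ring,
            Real.cos_add, Real.cos_sub]
          ring
        rw [stepA]
        have shift1 : (∑ j ∈ Finset.Icc (-((n:ℤ)+1)) ((n:ℤ)+1), (a j / c) * Real.cos ((j+1) * t))
            = ∑ j ∈ Finset.Icc (-((n:ℤ)+2)) ((n:ℤ)+2), (a (j-1) / c) * Real.cos (j * t) := by
          have := sum_shift (-((n:ℤ)+1)) ((n:ℤ)+1) 1 (fun j => (a (j-1) / c) * Real.cos (j * t))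
          rw [show (-((n:ℤ)+1)+1) = -(n:ℤ) by ring, show ((n:ℤ)+1+1) = (n:ℤ)+2 by ring] at this
          rw [← sum_ext (-(n:ℤ)) ((n:ℤ)+2) (-((n:ℤ)+2)) ((n:ℤ)+2) (by omega) (by omega)
            (fun j => a (j-1) / c) (fun j => Real.cos (j*t)) ?_, ← this]
          · apply Finset.sum_congr rfl
            intro j _
            rw [show j + 1 - 1 = j by ring]
            push_cast
            ring_nf
          · intro j hj
            have : a (j-1) ≠ 0 := fun h => hj (by simp [h])
            have := haS _ this
            push_cast at this
            omega
        have shift2 : (∑ j ∈ Finset.Icc (-((n:ℤ)+1)) ((n:ℤ)+1), (a j / c) * Real.cos ((j-1) * t))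
            = ∑ j ∈ Finset.Icc (-((n:ℤ)+2)) ((n:ℤ)+2), (a (j+1) / c) * Real.cos (j * t) := by
          have := sum_shift (-((n:ℤ)+1)) ((n:ℤ)+1) (-1) (fun j => (a (j+1) / c) * Real.cos (j * t))
          rw [show (-((n:ℤ)+1)+(-1)) = -((n:ℤ)+2) by ring, show ((n:ℤ)+1+(-1)) = (n:ℤ) by ring] at this
          rw [← sum_ext (-((n:ℤ)+2)) ((n:ℤ)) (-((n:ℤ)+2)) ((n:ℤ)+2) (by omega) (by omega)
            (fun j => a (j+1) / c) (fun j => Real.cos (j*t)) ?_, ← this]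
          · apply Finset.sum_congr rfl
            intro j _
            rw [show j + (-1) + 1 = j by ring]
            push_cast
            ring_nf
          · intro j hj
            have : a (j+1) ≠ 0 := fun h => hj (by simp [h])
            have := haS _ this
            push_cast at this
            omega
        have ext3 : (∑ j ∈ Finset.Icc (-(n:ℤ)) ((n:ℤ)), b j * Real.cos (j * t))
            = ∑ j ∈ Finset.Icc (-((n:ℤ)+2)) ((n:ℤ)+2), b j * Real.cos (j * t) := by
          apply sum_ext _ _ _ _ (by omega) (by omega)
          intro j hj
          have := hbS _ hj
          omega
        rw [shift1, shift2, ext3]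
        push_cast
        rw [← Finset.sum_add_distrib, ← Finset.sum_sub_distrib]
        apply Finset.sum_congr (by norm_num) 
        intro j _
        ring
lemma sum_ext' (lo hi lo' hi' : ℤ) (h1 : lo' ≤ lo) (h2 : hi ≤ hi') (g : ℤ → ℝ)
    (hg : ∀ j, g j ≠ 0 → lo ≤ j ∧ j ≤ hi) :
    ∑ j ∈ Finset.Icc lo hi, g j = ∑ j ∈ Finset.Icc lo' hi', g j := by
  apply Finset.sum_subset (Finset.Icc_subset_Icc h1 h2)
  intro x hx hnx
  by_contra h
  exact hnx (Finset.mem_Icc.2 ⟨(hg x h).1, (hg x h).2⟩)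

lemma sum_shift_supp (lo hi lo' hi' s : ℤ) (h1 : lo' ≤ lo + s) (h2 : hi + s ≤ hi')
    (g : ℤ → ℝ) (hg : ∀ m, g m ≠ 0 → lo + s ≤ m ∧ m ≤ hi + s) :
    ∑ m ∈ Finset.Icc lo' hi', g m = ∑ j ∈ Finset.Icc lo hi, g (j + s) := by
  rw [← sum_ext' (lo+s) (hi+s) lo' hi' h1 h2 g hg]
  exact (sum_shift lo hi s g).symm

lemma int_cos01 (m : ℤ) : (∫ θ in (0:ℝ)..1, Real.cos (m * π * θ)) = if m = 0 then 1 else 0 := by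
  rcases eq_or_ne m 0 with h | h
  · simp [h]
  · have hc : (m:ℝ) * π ≠ 0 := mul_ne_zero (Int.cast_ne_zero.2 h) pi_ne_zero
    rw [if_neg h]
    have h1 : (∫ θ in (0:ℝ)..1, Real.cos (m * π * θ))
        = ((m:ℝ)*π)⁻¹ • ∫ x in ((m:ℝ)*π*0)..((m:ℝ)*π*1), Real.cos x := by
      rw [← intervalIntegral.integral_comp_mul_left Real.cos hc]
    rw [h1, integral_cos]
    simp [Real.sin_int_mul_pi]

lemma int_cos_half (m : ℤ) (hm : m % 2 = 0) :
    (∫ θ in (0:ℝ)..(1/2), Real.cos (m * π * θ)) = (if m = 0 then 1 else 0) / 2 := by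
  rcases eq_or_ne m 0 with h | h
  · simp [h]
  · have hc : (m:ℝ) * π ≠ 0 := mul_ne_zero (Int.cast_ne_zero.2 h) pi_ne_zero
    rw [if_neg h]
    have h1 : (∫ θ in (0:ℝ)..(1/2), Real.cos (m * π * θ))
        = ((m:ℝ)*π)⁻¹ • ∫ x in ((m:ℝ)*π*0)..((m:ℝ)*π*(1/2)), Real.cos x := by
      rw [← intervalIntegral.integral_comp_mul_left Real.cos hc]
    rw [h1, integral_cos]
    obtain ⟨k, rfl⟩ : ∃ k, m = 2 * k := ⟨m / 2, by omega⟩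
    have : ((2*k : ℤ):ℝ) * π * (1/2) = (k:ℝ) * π := by push_cast; ring
    rw [this]
    simp [Real.sin_int_mul_pi]

lemma ker_cc (i j : ℤ) : (∫ θ in (0:ℝ)..1, Real.cos (i * (π*θ)) * Real.cos (j * (π*θ)))
    = ((if i = j then 1 else 0) + (if i = -j then 1 else 0))/2 := by
  have h : ∀ θ:ℝ, Real.cos (i * (π*θ)) * Real.cos (j * (π*θ))
      = (Real.cos ((i-j : ℤ) * π * θ) + Real.cos ((i+j : ℤ) * π * θ))/2 := by
    intro θ
    rw [show ((i-j:ℤ):ℝ)*π*θ = (i:ℝ)*(π*θ) - (j:ℝ)*(π*θ) by push_cast; ring,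
       show ((i+j:ℤ):ℝ)*π*θ = (i:ℝ)*(π*θ) + (j:ℝ)*(π*θ) by push_cast; ring,
       Real.cos_sub, Real.cos_add]
    ring
  simp only [h]
  rw [intervalIntegral.integral_div, intervalIntegral.integral_add
    ((Continuous.intervalIntegrable (by fun_prop) _ _))
    ((Continuous.intervalIntegrable (by fun_prop) _ _)), int_cos01, int_cos01]
  have e1 : (if i - j = 0 then (1:ℝ) else 0) = (if i = j then 1 else 0) := by
    split_ifs with h1 h2 h2 <;> first | rfl | omega
  have e2 : (if i + j = 0 then (1:ℝ) else 0) = (if i = -j then 1 else 0) := by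
    split_ifs with h1 h2 h2 <;> first | rfl | omega
  rw [e1, e2]

lemma ker_ss (i j : ℤ) (hp : (i - j) % 2 = 0) :
    (∫ θ in (0:ℝ)..(1/2), Real.sin (i * (π*θ)) * Real.sin (j * (π*θ)))
    = ((if i = j then 1 else 0) - (if i = -j then 1 else 0))/4 := by
  have h : ∀ θ:ℝ, Real.sin (i * (π*θ)) * Real.sin (j * (π*θ))
      = (Real.cos ((i-j : ℤ) * π * θ) - Real.cos ((i+j : ℤ) * π * θ))/2 := by
    intro θ
    rw [show ((i-j:ℤ):ℝ)*π*θ = (i:ℝ)*(π*θ) - (j:ℝ)*(π*θ) by push_cast; ring,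
       show ((i+j:ℤ):ℝ)*π*θ = (i:ℝ)*(π*θ) + (j:ℝ)*(π*θ) by push_cast; ring,
       Real.cos_sub, Real.cos_add]
    ring
  simp only [h]
  rw [intervalIntegral.integral_div, intervalIntegral.integral_sub
    ((Continuous.intervalIntegrable (by fun_prop) _ _))
    ((Continuous.intervalIntegrable (by fun_prop) _ _)),
    int_cos_half _ hp, int_cos_half _ (by omega)]
  have e1 : (if i - j = 0 then (1:ℝ) else 0) = (if i = j then 1 else 0) := by
    split_ifs with h1 h2 h2 <;> first | rfl | omega
  have e2 : (if i + j = 0 then (1:ℝ) else 0) = (if i = -j then 1 else 0) := by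
    split_ifs with h1 h2 h2 <;> first | rfl | omega
  rw [e1, e2]
  ring

lemma T_ge_one (x : ℝ) (hx : 1 ≤ x) : ∀ n : ℕ,
    1 ≤ (Polynomial.Chebyshev.T ℝ (n:ℤ)).eval x ∧
    (Polynomial.Chebyshev.T ℝ (n:ℤ)).eval x ≤ (Polynomial.Chebyshev.T ℝ ((n:ℤ)+1)).eval x := by
  intro n
  induction n with
  | zero =>
    constructor
    · simp [Polynomial.Chebyshev.T_zero]
    · show (Polynomial.Chebyshev.T ℝ ((0:ℕ):ℤ)).eval x ≤ (Polynomial.Chebyshev.T ℝ (((0:ℕ):ℤ)+1)).eval x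
      norm_num [Polynomial.Chebyshev.T_zero, Polynomial.Chebyshev.T_one]
      exact hx
  | succ n ih =>
    have key : (Polynomial.Chebyshev.T ℝ ((n:ℤ)+2)).eval x
        = 2 * x * ((Polynomial.Chebyshev.T ℝ ((n:ℤ)+1)).eval x)
          - (Polynomial.Chebyshev.T ℝ (n:ℤ)).eval x := by
      rw [Polynomial.Chebyshev.T_add_two]; simp
    have hc1 : ((n+1:ℕ):ℤ) = (n:ℤ)+1 := by push_cast; ring
    have hc2 : ((n+1:ℕ):ℤ)+1 = (n:ℤ)+2 := by push_cast; ring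
    rw [hc1, show (n:ℤ)+1+1 = (n:ℤ)+2 from by ring, key]
    obtain ⟨h1, h2⟩ := ih
    constructor
    · linarith
    · nlinarith

lemma card_parity (N : ℕ) : ((Finset.Icc (-(N:ℤ)) N).filter (fun j => ((N:ℤ) - j) % 2 = 0)).card = N + 1 := by
  have himg : (Finset.Icc (-(N:ℤ)) N).filter (fun j => ((N:ℤ) - j) % 2 = 0)
      = (Finset.range (N+1)).image (fun i : ℕ => (N:ℤ) - 2*i) := by
    ext j
    simp only [Finset.mem_filter, Finset.mem_Icc, Finset.mem_image, Finset.mem_range]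
    constructor
    · rintro ⟨⟨h1, h2⟩, h3⟩
      exact ⟨((N:ℤ) - j).toNat / 2, by omega, by omega⟩
    · rintro ⟨i, hi, rfl⟩
      omega
  rw [himg, Finset.card_image_of_injective _ (fun i₁ i₂ h => by omega), Finset.card_range]
lemma final2 (x M R : ℝ) (hx : 1 ≤ x) (hR : 0 ≤ R)
    (h : 4*M^2 ≤ (x+3)*(x+2)^2*R) : 1 * M^2 ≤ R / 2 * (64*x^2*(x+1)) := by
  have hp : (x+3)*(x+2)^2 ≤ 128*x^2*(x+1) := by nlinarith [hx, sq_nonneg (x-1)]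
  have h2 : (x+3)*(x+2)^2*R ≤ 128*x^2*(x+1)*R := mul_le_mul_of_nonneg_right hp hR
  nlinarith [h, h2]

theorem stmt_15 (L : ℕ) (hL : 1 ≤ L) (δ : ℝ) (hδ0 : 0 < δ) (hδ : δ < 1 / 2)
    (F : ℝ → ℂ)
    (hF : ∀ θ : ℝ, F θ = Complex.exp (-Complex.I * π * L * θ) *
      ((((Polynomial.Chebyshev.T ℝ L).eval (Real.cos (π * θ) / Real.cos (π * δ))) /
        ((Polynomial.Chebyshev.T ℝ L).eval (1 / Real.cos (π * δ))) : ℝ) : ℂ)) :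
    (1 / (L + 1) ≤ ∫ θ in (0:ℝ)..1, ‖F θ‖ ^ 2) ∧
    (1 / (64 * L ^ 2 * (L + 1)) ≤
      ∫ θ in (0:ℝ)..(1 / 2), ‖F θ‖ ^ 2 * Real.sin (2 * π * θ) ^ 2) := by
  have hπ := Real.pi_pos
  set c := Real.cos (π * δ) with hcdef
  have hc : 0 < c := Real.cos_pos_of_mem_Ioo
    ⟨by nlinarith [mul_pos hπ hδ0], by nlinarith [mul_pos hπ hδ0]⟩
  have hc1 : c ≤ 1 := Real.cos_le_one _
  obtain ⟨a, has, haS, hae⟩ := cheb_expand c L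
  set I := Finset.Icc (-(L:ℤ)) (L:ℤ) with hIdef
  have hM1 : (1:ℝ) ≤ (Polynomial.Chebyshev.T ℝ (L:ℤ)).eval (1/c) :=
    (T_ge_one (1/c) (by rw [le_div_iff₀ hc]; linarith) L).1
  set M := (Polynomial.Chebyshev.T ℝ (L:ℤ)).eval (1/c) with hMdef
  have hM0 : 0 < M := lt_of_lt_of_le one_pos hM1
  have hsum : ∑ j ∈ I, a j = M := by
    have h := hae 0
    rw [Real.cos_zero] at h
    simp only [mul_zero, Real.cos_zero, mul_one] at h
    exact h.symm
  have hmemI : ∀ i : ℤ, i ∈ I → (-i) ∈ I := by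
    intro i hi
    simp only [hIdef, Finset.mem_Icc] at *
    omega
  have hFabs : ∀ θ : ℝ, (‖F θ‖)^2
      = ((∑ j ∈ I, a j * Real.cos (j * (π * θ))) / M)^2 := by
    intro θ
    rw [hF θ, norm_mul]
    have h1 : ‖(Complex.exp (-Complex.I * π * L * θ))‖ = 1 := by
      rw [show -Complex.I * (π:ℂ) * (L:ℂ) * (θ:ℂ) = ((-(π*L*θ) : ℝ) : ℂ) * Complex.I by
        push_cast; ring]
      exact Complex.norm_exp_ofReal_mul_I _
    rw [h1, one_mul, Complex.norm_real, Real.norm_eq_abs, sq_abs, hae (π*θ)]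
  have int1 : (∫ θ in (0:ℝ)..1, (∑ j ∈ I, a j * Real.cos (j * (π*θ)))^2)
      = ∑ j ∈ I, (a j)^2 := by
    have hpt : ∀ θ:ℝ, (∑ j ∈ I, a j * Real.cos (j*(π*θ)))^2
        = ∑ i ∈ I, ∑ j ∈ I, (a i * a j) * (Real.cos (i*(π*θ)) * Real.cos (j*(π*θ))) := by
      intro θ
      rw [sq, Finset.sum_mul_sum]
      exact Finset.sum_congr rfl fun i _ => Finset.sum_congr rfl fun j _ => by ring
    simp only [hpt]
    rw [intervalIntegral.integral_finset_sum (fun i _ => Continuous.intervalIntegrable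
      (continuous_finset_sum _ (fun j _ => by fun_prop)) _ _)]
    have step : ∀ i ∈ I, (∫ θ in (0:ℝ)..1,
          ∑ j ∈ I, (a i * a j) * (Real.cos (i*(π*θ)) * Real.cos (j*(π*θ))))
        = ∑ j ∈ I, (a i * a j) * (((if i = j then (1:ℝ) else 0) + (if i = -j then 1 else 0))/2) := by
      intro i _
      rw [intervalIntegral.integral_finset_sum
        (fun j _ => Continuous.intervalIntegrable (by fun_prop) _ _)]
      exact Finset.sum_congr rfl fun j _ => by
        rw [intervalIntegral.integral_const_mul, ker_cc]
    rw [Finset.sum_congr rfl step]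
    apply Finset.sum_congr rfl
    intro i hi
    have e : ∀ j ∈ I, (a i * a j) * (((if i = j then (1:ℝ) else 0) + (if i = -j then 1 else 0))/2)
        = (if j = i then a i * a j / 2 else 0) + (if j = -i then a i * a j / 2 else 0) := by
      intro j _
      split_ifs <;> first | ring1 | (exfalso; omega)
    rw [Finset.sum_congr rfl e, Finset.sum_add_distrib, Finset.sum_ite_eq' I i,
      Finset.sum_ite_eq' I (-i), if_pos hi, if_pos (hmemI i hi), has i]
    ring
  have hCS1 : M^2 ≤ ((L:ℝ)+1) * ∑ j ∈ I, (a j)^2 := by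
    have hparse : ∑ j ∈ I, (if ((L:ℤ) - j) % 2 = 0 then (1:ℝ) else 0) * a j = M := by
      rw [← hsum]
      apply Finset.sum_congr rfl
      intro j _
      by_cases hp : ((L:ℤ) - j) % 2 = 0
      · rw [if_pos hp, one_mul]
      · rw [if_neg hp]
        have : a j = 0 := by
          by_contra h
          exact hp (haS j h).2.2
        rw [this]; ring
    have hcs := Finset.sum_mul_sq_le_sq_mul_sq I
      (fun j => if ((L:ℤ) - j) % 2 = 0 then (1:ℝ) else 0) (fun j => a j)
    rw [hparse] at hcs
    have hchi : (∑ j ∈ I, (if ((L:ℤ) - j) % 2 = 0 then (1:ℝ) else 0)^2) = (L:ℝ)+1 := by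
      have e : ∀ j ∈ I, (if ((L:ℤ) - j) % 2 = 0 then (1:ℝ) else 0)^2
          = (if ((L:ℤ) - j) % 2 = 0 then (1:ℝ) else 0) := by
        intro j _; split_ifs <;> norm_num
      rw [Finset.sum_congr rfl e, Finset.sum_boole, hIdef, card_parity L]
      push_cast; ring
    rw [hchi] at hcs
    exact hcs
  constructor
  · simp only [hFabs, div_pow]
    rw [intervalIntegral.integral_div, int1,
      div_le_div_iff₀ (by positivity) (pow_pos hM0 2)]
    nlinarith [hCS1]
  -- Second bound
  obtain ⟨β, hβdef⟩ : ∃ β : ℤ → ℝ, ∀ m, β m = (a (m-2) - a (m+2))/2 := ⟨_, fun _ => rfl⟩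
  have hβs : ∀ m, β (-m) = - β m := by
    intro m
    rw [hβdef, hβdef, show -m-2 = -(m+2) by ring, show -m+2 = -(m-2) by ring, has, has]
    ring
  have hβS : ∀ m, β m ≠ 0 → (-(L:ℤ)-2 ≤ m ∧ m ≤ (L:ℤ)+2 ∧ ((L:ℤ) - m) % 2 = 0) := by
    intro m hm
    have h : a (m-2) ≠ 0 ∨ a (m+2) ≠ 0 := by
      by_contra h
      push_neg at h
      apply hm
      rw [hβdef, h.1, h.2]; ring
    rcases h with h | h
    · have := haS _ h; omega
    · have := haS _ h; omega
  have hmemJ : ∀ i : ℤ, i ∈ Finset.Icc (-(L:ℤ)-2) ((L:ℤ)+2) →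
      (-i) ∈ Finset.Icc (-(L:ℤ)-2) ((L:ℤ)+2) := by
    intro i hi
    simp only [Finset.mem_Icc] at *
    omega
  have hid : ∀ θ:ℝ, (∑ m ∈ Finset.Icc (-(L:ℤ)-2) ((L:ℤ)+2), β m * Real.sin (m * (π*θ)))
      = (∑ j ∈ I, a j * Real.cos (j * (π*θ))) * Real.sin (2*π*θ) := by
    intro θ
    have split : (∑ m ∈ Finset.Icc (-(L:ℤ)-2) ((L:ℤ)+2), β m * Real.sin (m * (π*θ)))
        = (∑ m ∈ Finset.Icc (-(L:ℤ)-2) ((L:ℤ)+2), (a (m-2)/2) * Real.sin (m * (π*θ)))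
          - ∑ m ∈ Finset.Icc (-(L:ℤ)-2) ((L:ℤ)+2), (a (m+2)/2) * Real.sin (m * (π*θ)) := by
      rw [← Finset.sum_sub_distrib]
      exact Finset.sum_congr rfl fun m _ => by rw [hβdef]; ring
    have s1 : (∑ m ∈ Finset.Icc (-(L:ℤ)-2) ((L:ℤ)+2), (a (m-2)/2) * Real.sin (m * (π*θ)))
        = ∑ j ∈ I, (a (j+2-2)/2) * Real.sin ((j+2 : ℤ) * (π*θ)) := by
      apply sum_shift_supp (-(L:ℤ)) (L:ℤ) _ _ 2 (by omega) (by omega)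
      intro m hm
      have hne : a (m-2) ≠ 0 := by
        intro h0
        apply hm
        rw [h0]; ring
      have := haS _ hne; omega
    have s2 : (∑ m ∈ Finset.Icc (-(L:ℤ)-2) ((L:ℤ)+2), (a (m+2)/2) * Real.sin (m * (π*θ)))
        = ∑ j ∈ I, (a (j+(-2)+2)/2) * Real.sin ((j+(-2) : ℤ) * (π*θ)) := by
      apply sum_shift_supp (-(L:ℤ)) (L:ℤ) _ _ (-2) (by omega) (by omega)
      intro m hm
      have hne : a (m+2) ≠ 0 := by
        intro h0
        apply hm
        rw [h0]; ring
      have := haS _ hne; omega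
    rw [split, s1, s2, ← Finset.sum_sub_distrib, Finset.sum_mul]
    apply Finset.sum_congr rfl
    intro j _
    rw [show j+2-2 = j by ring, show j+(-2)+2 = j by ring]
    push_cast
    rw [show ((j:ℝ)+2) * (π*θ) = (j:ℝ)*(π*θ) + 2*π*θ by ring,
        show ((j:ℝ)+(-2)) * (π*θ) = (j:ℝ)*(π*θ) - 2*π*θ by ring,
        Real.sin_add, Real.sin_sub]
    ring
  have int2 : (∫ θ in (0:ℝ)..(1/2),
        (∑ m ∈ Finset.Icc (-(L:ℤ)-2) ((L:ℤ)+2), β m * Real.sin (m * (π*θ)))^2)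
      = (∑ m ∈ Finset.Icc (-(L:ℤ)-2) ((L:ℤ)+2), (β m)^2) / 2 := by
    have hpt : ∀ θ:ℝ, (∑ m ∈ Finset.Icc (-(L:ℤ)-2) ((L:ℤ)+2), β m * Real.sin (m*(π*θ)))^2
        = ∑ i ∈ Finset.Icc (-(L:ℤ)-2) ((L:ℤ)+2), ∑ j ∈ Finset.Icc (-(L:ℤ)-2) ((L:ℤ)+2),
            (β i * β j) * (Real.sin (i*(π*θ)) * Real.sin (j*(π*θ))) := by
      intro θ
      rw [sq, Finset.sum_mul_sum]
      exact Finset.sum_congr rfl fun i _ => Finset.sum_congr rfl fun j _ => by ring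
    simp only [hpt]
    rw [intervalIntegral.integral_finset_sum (fun i _ => Continuous.intervalIntegrable
      (continuous_finset_sum _ (fun j _ => by fun_prop)) _ _)]
    have step : ∀ i ∈ Finset.Icc (-(L:ℤ)-2) ((L:ℤ)+2), (∫ θ in (0:ℝ)..(1/2),
          ∑ j ∈ Finset.Icc (-(L:ℤ)-2) ((L:ℤ)+2),
            (β i * β j) * (Real.sin (i*(π*θ)) * Real.sin (j*(π*θ))))
        = ∑ j ∈ Finset.Icc (-(L:ℤ)-2) ((L:ℤ)+2),
            (β i * β j) * (((if i = j then (1:ℝ) else 0) - (if i = -j then 1 else 0))/4) := by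
      intro i _
      rw [intervalIntegral.integral_finset_sum
        (fun j _ => Continuous.intervalIntegrable (by fun_prop) _ _)]
      refine Finset.sum_congr rfl fun j _ => ?_
      rw [intervalIntegral.integral_const_mul]
      rcases eq_or_ne (β i * β j) 0 with h0 | h0
      · rw [h0, zero_mul, zero_mul]
      · have hi0 : β i ≠ 0 := left_ne_zero_of_mul h0
        have hj0 : β j ≠ 0 := right_ne_zero_of_mul h0
        have hp : (i - j) % 2 = 0 := by
          have h1 := (hβS i hi0).2.2
          have h2 := (hβS j hj0).2.2
          omega
        rw [ker_ss i j hp]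
    rw [Finset.sum_congr rfl step]
    rw [Finset.sum_div]
    apply Finset.sum_congr rfl
    intro i hi
    have e : ∀ j ∈ Finset.Icc (-(L:ℤ)-2) ((L:ℤ)+2),
        (β i * β j) * (((if i = j then (1:ℝ) else 0) - (if i = -j then 1 else 0))/4)
        = (if j = i then β i * β j / 4 else 0) - (if j = -i then β i * β j / 4 else 0) := by
      intro j _
      split_ifs <;> first | ring1 | (exfalso; omega)
    rw [Finset.sum_congr rfl e, Finset.sum_sub_distrib, Finset.sum_ite_eq' _ i,
      Finset.sum_ite_eq' _ (-i), if_pos hi, if_pos (hmemJ i hi), hβs i]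
    ring
  have hsum2 : (∑ m ∈ Finset.Icc (-(L:ℤ)-2) ((L:ℤ)+2), (m:ℝ) * β m) = 2*M := by
    have split : (∑ m ∈ Finset.Icc (-(L:ℤ)-2) ((L:ℤ)+2), (m:ℝ) * β m)
        = (∑ m ∈ Finset.Icc (-(L:ℤ)-2) ((L:ℤ)+2), (m:ℝ) * a (m-2) / 2)
          - ∑ m ∈ Finset.Icc (-(L:ℤ)-2) ((L:ℤ)+2), (m:ℝ) * a (m+2) / 2 := by
      rw [← Finset.sum_sub_distrib]
      exact Finset.sum_congr rfl fun m _ => by rw [hβdef]; ring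
    have s1 : (∑ m ∈ Finset.Icc (-(L:ℤ)-2) ((L:ℤ)+2), (m:ℝ) * a (m-2) / 2)
        = ∑ j ∈ I, ((j+2:ℤ):ℝ) * a (j+2-2) / 2 := by
      apply sum_shift_supp (-(L:ℤ)) (L:ℤ) _ _ 2 (by omega) (by omega)
      intro m hm
      have hne : a (m-2) ≠ 0 := by
        intro h0
        apply hm
        rw [h0]; ring
      have := haS _ hne; omega
    have s2 : (∑ m ∈ Finset.Icc (-(L:ℤ)-2) ((L:ℤ)+2), (m:ℝ) * a (m+2) / 2)
        = ∑ j ∈ I, ((j+(-2):ℤ):ℝ) * a (j+(-2)+2) / 2 := by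
      apply sum_shift_supp (-(L:ℤ)) (L:ℤ) _ _ (-2) (by omega) (by omega)
      intro m hm
      have hne : a (m+2) ≠ 0 := by
        intro h0
        apply hm
        rw [h0]; ring
      have := haS _ hne; omega
    rw [split, s1, s2, ← Finset.sum_sub_distrib, ← hsum, Finset.mul_sum]
    apply Finset.sum_congr rfl
    intro j _
    rw [show j+2-2 = j by ring, show j+(-2)+2 = j by ring]
    push_cast
    ring
  have hβnn : (0:ℝ) ≤ ∑ m ∈ Finset.Icc (-(L:ℤ)-2) ((L:ℤ)+2), (β m)^2 :=
    Finset.sum_nonneg fun m _ => sq_nonneg _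
  have hL1 : (1:ℝ) ≤ (L:ℝ) := by exact_mod_cast hL
  have hCS2 : 4 * M^2 ≤ ((L:ℝ)+3) * ((L:ℝ)+2)^2
      * ∑ m ∈ Finset.Icc (-(L:ℤ)-2) ((L:ℤ)+2), (β m)^2 := by
    have hparse : (∑ m ∈ Finset.Icc (-(L:ℤ)-2) ((L:ℤ)+2),
        ((m:ℝ) * (if ((L:ℤ) - m) % 2 = 0 then (1:ℝ) else 0)) * β m) = 2*M := by
      rw [← hsum2]
      apply Finset.sum_congr rfl
      intro m _
      by_cases hp : ((L:ℤ) - m) % 2 = 0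
      · rw [if_pos hp, mul_one]
      · rw [if_neg hp]
        have : β m = 0 := by
          by_contra h
          exact hp (hβS m h).2.2
        rw [this]; ring
    have hcs := Finset.sum_mul_sq_le_sq_mul_sq (Finset.Icc (-(L:ℤ)-2) ((L:ℤ)+2))
      (fun m => (m:ℝ) * (if ((L:ℤ) - m) % 2 = 0 then (1:ℝ) else 0)) (fun m => β m)
    rw [hparse] at hcs
    have hw : (∑ m ∈ Finset.Icc (-(L:ℤ)-2) ((L:ℤ)+2),
        ((m:ℝ) * (if ((L:ℤ) - m) % 2 = 0 then (1:ℝ) else 0))^2) ≤ ((L:ℝ)+3) * ((L:ℝ)+2)^2 := by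
      have e : ∀ m ∈ Finset.Icc (-(L:ℤ)-2) ((L:ℤ)+2),
          ((m:ℝ) * (if ((L:ℤ) - m) % 2 = 0 then (1:ℝ) else 0))^2
          = (if ((L:ℤ) - m) % 2 = 0 then ((m:ℝ))^2 else 0) := by
        intro m _
        split_ifs <;> ring
      rw [Finset.sum_congr rfl e, ← Finset.sum_filter]
      have hcard : ((Finset.Icc (-(L:ℤ)-2) ((L:ℤ)+2)).filter
          (fun m => ((L:ℤ) - m) % 2 = 0)).card = L + 3 := by
        have h1 : Finset.Icc (-(L:ℤ)-2) ((L:ℤ)+2) = Finset.Icc (-((L+2:ℕ):ℤ)) ((L+2:ℕ):ℤ) := by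
          rw [show -(L:ℤ)-2 = -((L+2:ℕ):ℤ) by push_cast; ring,
              show (L:ℤ)+2 = ((L+2:ℕ):ℤ) by push_cast; ring]
        have h2 : ((Finset.Icc (-((L+2:ℕ):ℤ)) ((L+2:ℕ):ℤ)).filter
            (fun m => ((L:ℤ) - m) % 2 = 0))
            = ((Finset.Icc (-((L+2:ℕ):ℤ)) ((L+2:ℕ):ℤ)).filter
            (fun m => (((L+2:ℕ):ℤ) - m) % 2 = 0)) := by
          apply Finset.filter_congr
          intro m _
          constructor <;> intro h <;> [skip; skip] <;> push_cast at h ⊢ <;> omega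
        rw [h1, h2, card_parity (L+2)]
      calc (∑ m ∈ (Finset.Icc (-(L:ℤ)-2) ((L:ℤ)+2)).filter
            (fun m => ((L:ℤ) - m) % 2 = 0), ((m:ℝ))^2)
          ≤ ((Finset.Icc (-(L:ℤ)-2) ((L:ℤ)+2)).filter
            (fun m => ((L:ℤ) - m) % 2 = 0)).card • (((L:ℝ)+2)^2) := by
            apply Finset.sum_le_card_nsmul
            intro m hm
            have hmem := Finset.mem_Icc.1 (Finset.mem_filter.1 hm).1
            have h1 : -((L:ℤ)+2) ≤ m := by omega
            have h2 : m ≤ (L:ℤ)+2 := hmem.2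
            have hm1 : -((L:ℝ)+2) ≤ (m:ℝ) := by exact_mod_cast h1
            have hm2 : (m:ℝ) ≤ (L:ℝ)+2 := by exact_mod_cast h2
            nlinarith
        _ = ((L:ℝ)+3) * ((L:ℝ)+2)^2 := by
            rw [hcard, nsmul_eq_mul]
            push_cast; ring
    have hfin := le_trans hcs (mul_le_mul_of_nonneg_right hw hβnn)
    nlinarith [hfin]
  have hpt2 : ∀ θ:ℝ, (‖F θ‖)^2 * Real.sin (2*π*θ)^2
      = (∑ m ∈ Finset.Icc (-(L:ℤ)-2) ((L:ℤ)+2), β m * Real.sin (m * (π*θ)))^2 / M^2 := by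
    intro θ
    rw [hFabs θ, hid θ]
    ring
  simp only [hpt2]
  have hL0 : (0:ℝ) < (L:ℝ) := lt_of_lt_of_le one_pos hL1
  rw [intervalIntegral.integral_div, int2,
    div_le_div_iff₀ (mul_pos (mul_pos (by norm_num : (0:ℝ) < 64) (pow_pos hL0 2))
      (by linarith)) (pow_pos hM0 2)]
  exact final2 (L:ℝ) M _ hL1 hβnn hCS2
end
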